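/- Let n ≥ 2 and let ω = Σ_{i=0}^n a_i dx_i be a polynomial 1-form defining a degree-d foliation ℱ on ℙⁿ: the a_i ∈ MvPolynomial (Fin (n+1)) ℂ are homogeneous of degree d+1, have no common non-unit factor, satisfy Σ_i x_i a_i = 0, and satisfy the integrability condition a_i(∂_j a_k − ∂_k a_j) + a_j(∂_k a_i − ∂_i a_k) + a_k(∂_i a_j − ∂_j a_i) = 0 for all i, j, k. Assume the Gauss map of ℱ is non-degenerate, i.e. D = det(∂_j a_i)_{0≤i,j≤n} ≠ 0. If ℓ_1, …, ℓ_N are pairwise non-proportional linear forms, each invariant for ℱ (writing ℓ_t = Σ_i c_i x_i, the form ℓ_t divides c_i·a_j − c_j·a_i for all i, j), then N·(n−1) ≤ (n+1)·d; that is, ℱ has at most ((n+1)/(n−1))·deg(ℱ) invariant hyperplanes. -/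

import Mathlib

open MvPolynomial

noncomputable section

private lemma det_rank_two_add_smul {m : ℕ} {S : Type*} [CommRing S]
    (u v w z : Fin m → S) (E : Matrix (Fin m) (Fin m) S) (t : S) :
    t ^ (m - 2) ∣ (Matrix.of fun i j => u i * v j + w i * z j + t * E i j).det := by
  classical
  set f := (Matrix.detRowAlternating : (Fin m → S) [⋀^Fin m]→ₗ[S] S) with hf
  set c : Fin m → Fin 3 → S := fun i r => if r = 0 then u i else if r = 1 then w i else t with hc
  set mv : Fin m → Fin 3 → (Fin m → S) :=
    fun i r => if r = 0 then v else if r = 1 then z else E i with hmv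
  have hdet : (Matrix.of fun i j => u i * v j + w i * z j + t * E i j).det
      = f.toMultilinearMap (fun i => ∑ r : Fin 3, c i r • mv i r) := by
    show (Matrix.of fun i j => u i * v j + w i * z j + t * E i j).det = f _
    rw [Matrix.det]
    congr 1
    funext i
    funext j
    simp [hc, hmv, Fin.sum_univ_three, Matrix.of_apply]
  rw [hdet, MultilinearMap.map_sum]
  apply Finset.dvd_sum
  intro r _
  rw [MultilinearMap.map_smul_univ]
  by_cases h0 : ∃ i j : Fin m, i ≠ j ∧ r i = r j ∧ r i ≠ 2
  · obtain ⟨i, j, hij, hrr, h2⟩ := h0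
    have : mv i (r i) = mv j (r j) := by
      rcases (by decide : ∀ x : Fin 3, x ≠ 2 → x = 0 ∨ x = 1) (r i) h2 with h | h <;>
        simp [hmv, h, ← hrr]
    have hz : f.toMultilinearMap (fun i => mv i (r i)) = 0 :=
      f.map_eq_zero_of_eq _ this hij
    rw [hz, smul_zero]
    exact dvd_zero _
  · push_neg at h0
    set T := Finset.univ.filter (fun i => r i = 2) with hT
    have hcompl : Tᶜ.card ≤ 2 := by
      have hmaps : ∀ i ∈ Tᶜ, r i ∈ ({0, 1} : Finset (Fin 3)) := by
        intro i hi
        simp only [hT, Finset.mem_compl, Finset.mem_filter, Finset.mem_univ, true_and] at hi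
        rcases (by decide : ∀ x : Fin 3, x ≠ 2 → x = 0 ∨ x = 1) (r i) hi with h | h <;>
          simp [h]
      have hinj : Set.InjOn r (Tᶜ : Finset (Fin m)) := by
        intro i hi j hj hrr
        by_contra hne
        apply (by simpa [hT] using hi : ¬ r i = 2)
        exact h0 i j hne hrr
      calc Tᶜ.card ≤ ({0,1} : Finset (Fin 3)).card :=
            Finset.card_le_card_of_injOn r hmaps hinj
        _ ≤ 2 := by decide
    have hcard : m - 2 ≤ T.card := by
      have := Finset.card_add_card_compl T
      simp only [Fintype.card_fin] at this
      omega
    have hdvd : t ^ (m - 2) ∣ ∏ i, c i (r i) := by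
      rw [← Finset.prod_mul_prod_compl T]
      have hTprod : ∏ i ∈ T, c i (r i) = t ^ T.card := by
        rw [Finset.prod_congr rfl (fun i hi => ?_), Finset.prod_const]
        have : r i = 2 := by simpa [hT] using hi
        simp [hc, this]
      rw [hTprod]
      exact Dvd.dvd.mul_right (pow_dvd_pow t hcard) _
    rw [smul_eq_mul]
    exact hdvd.mul_right _

private lemma pderiv_isHomogeneous {σ : Type*} {k : ℕ}
    {φ : MvPolynomial σ ℂ} (h : φ.IsHomogeneous (k + 1)) (i : σ) :
    (pderiv i φ).IsHomogeneous k := by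
  classical
  have hdadd : ∀ x y : σ →₀ ℕ, Finsupp.degree (x + y) = x.degree + y.degree := by
    intro x y
    simp [Finsupp.degree_eq_weight_one, map_add]
  have hdsingle : (Finsupp.single i 1).degree = 1 := by
    exact Finsupp.degree_single i 1
  conv_lhs => rw [φ.as_sum]
  rw [map_sum]
  apply MvPolynomial.IsHomogeneous.sum
  intro m hm
  rw [pderiv_monomial]
  by_cases h0 : m i = 0
  · simp only [h0, Nat.cast_zero, mul_zero]
    rw [monomial_zero]
    exact isHomogeneous_zero _ _ _
  · apply isHomogeneous_monomial
    have hdm : m.degree = k + 1 := by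
      by_contra hne
      exact mem_support_iff.mp hm (h.coeff_eq_zero hne)
    have hle : Finsupp.single i 1 ≤ m := by
      rw [Finsupp.single_le_iff]
      omega
    have hadd : m - Finsupp.single i 1 + Finsupp.single i 1 = m := tsub_add_cancel_of_le hle
    have := congrArg Finsupp.degree hadd
    rw [hdadd, hdsingle, hdm] at this
    omega

private lemma det_isHomogeneous {σ : Type*} {m dd : ℕ}
    (M : Matrix (Fin m) (Fin m) (MvPolynomial σ ℂ))
    (h : ∀ i j, (M i j).IsHomogeneous dd) : M.det.IsHomogeneous (m * dd) := by
  rw [Matrix.det_apply]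
  apply MvPolynomial.IsHomogeneous.sum
  intro p _
  have hprod : (∏ i, M (p i) i).IsHomogeneous (m * dd) := by
    have := MvPolynomial.IsHomogeneous.prod Finset.univ (fun i => M (p i) i) (fun _ => dd)
      (fun i _ => h _ _)
    simpa [Finset.sum_const, Finset.card_univ, mul_comm] using this
  rcases Int.units_eq_one_or (Equiv.Perm.sign p) with hs | hs <;> rw [hs]
  · simpa using hprod
  · have : (-1 : ℤˣ) • (∏ i, M (p i) i) = -(∏ i, M (p i) i) := by
      rw [Units.smul_def]
      simp
    rw [this]
    exact hprod.neg

private lemma homog_factor {σ : Type*} {p q : ℕ} {P S Q : MvPolynomial σ ℂ}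
    (hP : P.IsHomogeneous p) (hQ : Q.IsHomogeneous q) (hP0 : P ≠ 0) (hQ0 : Q ≠ 0)
    (hQS : Q = P * S) : p ≤ q ∧ S.IsHomogeneous (q - p) := by
  have key : ∀ m', p + m' ≠ q → homogeneousComponent m' S = 0 := by
    intro m' hm'
    by_cases hrange : m' ∈ Finset.range (S.totalDegree + 1)
    swap
    · apply homogeneousComponent_eq_zero
      simp only [Finset.mem_range] at hrange
      omega
    · have h0 : homogeneousComponent (p + m') Q = 0 := by
        rw [homogeneousComponent_of_mem ((mem_homogeneousSubmodule _ _).mpr hQ), if_neg hm']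
      have hQsum : Q = ∑ i ∈ Finset.range (S.totalDegree + 1), P * homogeneousComponent i S := by
        rw [hQS, ← Finset.mul_sum, sum_homogeneousComponent]
      rw [hQsum, map_sum] at h0
      have hterm : ∀ b ∈ Finset.range (S.totalDegree + 1),
          homogeneousComponent (p + m') (P * homogeneousComponent b S)
            = if m' = b then P * homogeneousComponent b S else 0 := by
        intro b _
        rw [homogeneousComponent_of_mem ((mem_homogeneousSubmodule _ _).mpr
          (hP.mul (homogeneousComponent_isHomogeneous b S)))]
        simp only [add_right_inj]
      rw [Finset.sum_congr rfl hterm, Finset.sum_ite_eq _ m', if_pos hrange] at h0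
      exact (mul_eq_zero.mp h0).resolve_left hP0
  have hSsum : S = ∑ i ∈ Finset.range (S.totalDegree + 1), homogeneousComponent i S :=
    (sum_homogeneousComponent S).symm
  have hpq : p ≤ q := by
    by_contra hlt
    apply hQ0
    rw [hQS]
    have : S = 0 := by
      rw [hSsum]
      apply Finset.sum_eq_zero
      intro i _
      exact key i (by omega)
    rw [this, mul_zero]
  refine ⟨hpq, ?_⟩
  have hS : S = homogeneousComponent (q - p) S := by
    conv_lhs => rw [hSsum]
    rw [Finset.sum_eq_single (q - p)]
    · intro b _ hbne
      exact key b (by omega)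
    · intro hnot
      apply homogeneousComponent_eq_zero
      simp only [Finset.mem_range] at hnot
      omega
  rw [hS]
  exact homogeneousComponent_isHomogeneous _ _

private lemma prime_X_mv {n : ℕ} (k : Fin (n + 1)) :
    Prime (X k : MvPolynomial (Fin (n + 1)) ℂ) := by
  have h0 : Prime (X 0 : MvPolynomial (Fin (n + 1)) ℂ) := by
    rw [← MulEquiv.prime_iff (finSuccEquiv ℂ n).toMulEquiv]
    have : (finSuccEquiv ℂ n).toMulEquiv (X 0) = Polynomial.X := finSuccEquiv_X_zero
    rw [this]
    exact Polynomial.prime_X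
  have h1 := (MulEquiv.prime_iff (renameEquiv ℂ (Equiv.swap (0 : Fin (n + 1)) k)).toMulEquiv).mpr h0
  have h2 : (renameEquiv ℂ (Equiv.swap (0 : Fin (n + 1)) k)).toMulEquiv (X 0)
      = (X k : MvPolynomial (Fin (n + 1)) ℂ) := by
    simp [renameEquiv_apply, rename_X, Equiv.swap_apply_left]
  rwa [h2] at h1

private lemma prime_linear {n : ℕ} (c : Fin (n + 1) → ℂ) (k : Fin (n + 1)) (hk : c k ≠ 0) :
    Prime (∑ i, C (c i) * X i : MvPolynomial (Fin (n + 1)) ℂ) := by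
  classical
  set L : MvPolynomial (Fin (n + 1)) ℂ := ∑ i, C (c i) * X i with hL
  let F : MvPolynomial (Fin (n + 1)) ℂ →ₐ[ℂ] MvPolynomial (Fin (n + 1)) ℂ :=
    aeval (fun i => if i = k then L else X i)
  let G : MvPolynomial (Fin (n + 1)) ℂ →ₐ[ℂ] MvPolynomial (Fin (n + 1)) ℂ :=
    aeval (fun i => if i = k then
      C (c k)⁻¹ * (X k - ∑ j ∈ Finset.univ.erase k, C (c j) * X j) else X i)
  have hCk : C (c k)⁻¹ * C (c k) = (1 : MvPolynomial (Fin (n + 1)) ℂ) := by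
    rw [← C_mul, inv_mul_cancel₀ hk, C_1]
  have hsplit : L = C (c k) * X k + ∑ j ∈ Finset.univ.erase k, C (c j) * X j := by
    rw [hL, ← Finset.add_sum_erase _ _ (Finset.mem_univ k)]
  have hFG : F.comp G = AlgHom.id ℂ _ := by
    apply MvPolynomial.algHom_ext
    intro i
    by_cases hik : i = k
    · subst hik
      simp only [AlgHom.comp_apply, AlgHom.id_apply, G, aeval_X, if_pos rfl, if_true]
      rw [map_mul, map_sub, map_sum]
      have hFXk : F (X i) = L := by simp [F, aeval_X]
      have hFC : ∀ s : ℂ, F (C s) = C s := fun s => aeval_C _ s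
      rw [hFXk, hFC]
      have : ∀ j ∈ Finset.univ.erase i, F (C (c j) * X j) = C (c j) * X j := by
        intro j hj
        have hji : j ≠ i := Finset.ne_of_mem_erase hj
        rw [map_mul, hFC, aeval_X, if_neg hji]
      rw [Finset.sum_congr rfl this]
      rw [hsplit]
      rw [add_sub_cancel_right, ← mul_assoc, hCk, one_mul]
    · simp [F, G, hik]
  have hGF : G.comp F = AlgHom.id ℂ _ := by
    apply MvPolynomial.algHom_ext
    intro i
    by_cases hik : i = k
    · subst hik
      simp only [AlgHom.comp_apply, AlgHom.id_apply, F, aeval_X, if_pos rfl, if_true]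
      rw [hsplit, map_add, map_mul, map_sum]
      have hGC : ∀ s : ℂ, G (C s) = C s := fun s => aeval_C _ s
      have hGXk : G (X i) = C (c i)⁻¹ * (X i - ∑ j ∈ Finset.univ.erase i, C (c j) * X j) := by
        simp [G, aeval_X]
      have hrest : ∀ j ∈ Finset.univ.erase i, G (C (c j) * X j) = C (c j) * X j := by
        intro j hj
        have hji : j ≠ i := Finset.ne_of_mem_erase hj
        rw [map_mul, hGC, aeval_X, if_neg hji]
      rw [Finset.sum_congr rfl hrest, hGC, hGXk]
      have hCk' : C (c i) * C (c i)⁻¹ = (1 : MvPolynomial (Fin (n + 1)) ℂ) := by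
        rw [← C_mul, mul_inv_cancel₀ hk, C_1]
      rw [← mul_assoc, hCk', one_mul, sub_add_cancel]
    · simp [F, G, hik]
  let e := AlgEquiv.ofAlgHom F G hFG hGF
  have heXk : e (X k) = L := by
    show F (X k) = L
    simp [F]
  have := (MulEquiv.prime_iff e.toMulEquiv).mpr (prime_X_mv k)
  rwa [show e.toMulEquiv (X k) = L from heXk] at this


/-- A linear form: a nonzero homogeneous polynomial of degree 1. -/
def IsLinearForm (n : ℕ) (α : MvPolynomial (Fin (n + 1)) ℂ) : Prop :=
  α ≠ 0 ∧ α.IsHomogeneous 1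

/-- A completely reducible polynomial: a product of linear forms. -/
def CompletelyReducible (n : ℕ) (P : MvPolynomial (Fin (n + 1)) ℂ) : Prop :=
  ∃ s : Multiset (MvPolynomial (Fin (n + 1)) ℂ),
    (∀ α ∈ s, IsLinearForm n α) ∧ P = s.prod

/-- F and G have no common non-unit factor. -/
def RelPrime (n : ℕ) (F G : MvPolynomial (Fin (n + 1)) ℂ) : Prop :=
  ∀ p : MvPolynomial (Fin (n + 1)) ℂ, p ∣ F → p ∣ G → IsUnit p

/-- The generic fiber of the pencil generated by F and G is irreducible. -/
def GenericFiberIrreducible (n : ℕ) (F G : MvPolynomial (Fin (n + 1)) ℂ) : Prop :=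
  {c : ℂ | ¬ Irreducible (F + C c * G)}.Finite

/-- A degree-d foliation on ℙⁿ with non-degenerate Gauss map has at most
((n+1)/(n-1))·d invariant hyperplanes: if ℓ₁, …, ℓ_N are pairwise non-proportional
invariant linear forms then N·(n-1) ≤ (n+1)·d. -/
theorem invariant_hyperplanes_bound
    (n d : ℕ) (hn : 2 ≤ n)
    -- a degree-d foliation: coefficients aᵢ homogeneous of degree d+1, without common
    -- non-unit factor, annihilated by the radial field and integrable
    (a : Fin (n + 1) → MvPolynomial (Fin (n + 1)) ℂ)
    (hahom : ∀ i, (a i).IsHomogeneous (d + 1))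
    (hnocommon : ∀ p : MvPolynomial (Fin (n + 1)) ℂ, (∀ i, p ∣ a i) → IsUnit p)
    (hradial : ∑ i, X i * a i = 0)
    (hint : ∀ i j k : Fin (n + 1),
      a i * (pderiv j (a k) - pderiv k (a j)) +
      a j * (pderiv k (a i) - pderiv i (a k)) +
      a k * (pderiv i (a j) - pderiv j (a i)) = 0)
    -- the Gauss map is non-degenerate
    (hD : (Matrix.of fun i j => pderiv j (a i)).det ≠ 0)
    -- pairwise non-proportional invariant linear forms ℓ_t = Σᵢ cf t i · xᵢ
    (N : ℕ)
    (cf : Fin N → Fin (n + 1) → ℂ)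
    (ℓ : Fin N → MvPolynomial (Fin (n + 1)) ℂ)
    (hℓdef : ∀ t, ℓ t = ∑ i, C (cf t i) * X i)
    (hℓ0 : ∀ t, ℓ t ≠ 0)
    (hℓprop : ∀ t₁ t₂, t₁ ≠ t₂ → ∀ s : ℂ, ℓ t₁ ≠ C s * ℓ t₂)
    (hinv : ∀ t, ∀ i j : Fin (n + 1), ℓ t ∣ (C (cf t i) * a j - C (cf t j) * a i)) :
    N * (n - 1) ≤ (n + 1) * d := by
  classical
  set D : MvPolynomial (Fin (n + 1)) ℂ := (Matrix.of fun i j => pderiv j (a i)).det with hDdef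
  -- each ℓ t is homogeneous of degree 1
  have hℓhom : ∀ t, (ℓ t).IsHomogeneous 1 := by
    intro t
    rw [hℓdef]
    exact IsHomogeneous.sum _ _ _ (fun i _ => isHomogeneous_C_mul_X _ _)
  -- nonzero coefficient
  have hcoef : ∀ t, ∃ k, cf t k ≠ 0 := by
    intro t
    by_contra hall
    push_neg at hall
    apply hℓ0 t
    rw [hℓdef]
    simp [hall]
  -- each ℓ t is prime
  have hℓprime : ∀ t, Prime (ℓ t) := by
    intro t
    obtain ⟨k, hk⟩ := hcoef t
    rw [hℓdef]
    exact prime_linear (cf t) k hk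
  -- key divisibility
  have hkey : ∀ t, (ℓ t) ^ (n - 1) ∣ D := by
    intro t
    obtain ⟨k, hk⟩ := hcoef t
    have hq : ∀ i, ∃ Q, C (cf t k) * a i - C (cf t i) * a k = ℓ t * Q := fun i => hinv t k i
    choose q hq using hq
    set g : MvPolynomial (Fin (n + 1)) ℂ := C (cf t k)⁻¹ * a k with hg
    set h : Fin (n + 1) → MvPolynomial (Fin (n + 1)) ℂ := fun i => C (cf t k)⁻¹ * q i with hh
    have hCk : C (cf t k)⁻¹ * C (cf t k) = (1 : MvPolynomial (Fin (n + 1)) ℂ) := by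
      rw [← C_mul, inv_mul_cancel₀ hk, C_1]
    have ha : ∀ i, a i = C (cf t i) * g + ℓ t * h i := by
      intro i
      rw [hg, hh]
      linear_combination C (cf t k)⁻¹ * hq i - a i * hCk
    have hpl : ∀ j, pderiv j (ℓ t) = C (cf t j) := by
      intro j
      rw [hℓdef, map_sum]
      have : ∀ i, pderiv j (C (cf t i) * X i) =
          C (cf t i) * Pi.single (M := fun _ => MvPolynomial (Fin (n + 1)) ℂ) j 1 i := by
        intro i
        rw [pderiv_C_mul, pderiv_X]
      rw [Finset.sum_congr rfl (fun i _ => this i)]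
      rw [Finset.sum_eq_single j]
      · simp
      · intro b _ hbj
        rw [Pi.single_eq_of_ne hbj, mul_zero]
      · intro hj
        exact absurd (Finset.mem_univ j) hj
    have hent : ∀ i j, pderiv j (a i) =
        C (cf t i) * pderiv j g + h i * C (cf t j) + ℓ t * pderiv j (h i) := by
      intro i j
      have e1 : pderiv j (C (cf t i) * g) = C (cf t i) * pderiv j g := pderiv_C_mul
      have e2 : pderiv j (ℓ t * h i) = pderiv j (ℓ t) * h i + ℓ t * pderiv j (h i) :=
        pderiv_mul
      conv_lhs => rw [ha i]
      rw [map_add, e1, e2, hpl j]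
      ring
    have hmat : (Matrix.of fun i j => pderiv j (a i)) =
        (Matrix.of fun i j => C (cf t i) * pderiv j g + h i * C (cf t j)
          + ℓ t * pderiv j (h i)) := by
      funext i j
      exact hent i j
    have := det_rank_two_add_smul (fun i => C (cf t i)) (fun j => pderiv j g)
      h (fun j => C (cf t j)) (Matrix.of fun i j => pderiv j (h i)) (ℓ t)
    have hn1 : n + 1 - 2 = n - 1 := by omega
    rw [hn1] at this
    rw [hDdef, hmat]
    convert this using 3
    rfl
  -- product divisibility
  have hprod : ∀ s : Finset (Fin N), (∏ t ∈ s, (ℓ t) ^ (n - 1)) ∣ D := by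
    intro s
    induction s using Finset.induction with
    | empty => simp
    | insert _ _ hnotmem =>
      rename_i t s ih
      obtain ⟨Q, hQ⟩ := ih
      have hnd : ¬ ℓ t ∣ ∏ t' ∈ s, (ℓ t') ^ (n - 1) := by
        intro hdvd
        obtain ⟨t', ht', hdvd'⟩ := (hℓprime t).exists_mem_finset_dvd hdvd
        have : ℓ t ∣ ℓ t' := ((hℓprime t).dvd_of_dvd_pow hdvd')
        obtain ⟨S, hS⟩ := this
        have htt' : t ≠ t' := by rintro rfl; exact hnotmem ht'
        have hfac := homog_factor (hℓhom t) (hℓhom t') (hℓ0 t) (hℓ0 t') hS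
        have hS0 : S.IsHomogeneous 0 := by simpa using hfac.2
        have : S.totalDegree = 0 := Nat.le_zero.mp hS0.totalDegree_le
        have hSC : S = C (coeff 0 S) := by
          ext m
          by_cases hm : m = 0
          · subst hm; simp
          · rw [hS0.coeff_eq_zero (fun hdeg => hm ((Finsupp.degree_eq_zero_iff m).mp hdeg))]
            simp [coeff_C, Ne.symm hm]
        apply hℓprop t' t htt'.symm (coeff 0 S)
        conv_lhs => rw [hS, hSC]
        ring
      have hpow : (ℓ t) ^ (n - 1) ∣ Q := by
        have h1 : (ℓ t) ^ (n - 1) ∣ (∏ t' ∈ s, (ℓ t') ^ (n - 1)) * Q := hQ ▸ hkey t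
        exact (Prime.pow_dvd_of_dvd_mul_left (hℓprime t) _ hnd h1)
      obtain ⟨Q', hQ'⟩ := hpow
      rw [Finset.prod_insert hnotmem]
      exact ⟨Q', by rw [hQ, hQ']; ring⟩
  -- homogeneity of D
  have hDhom : D.IsHomogeneous ((n + 1) * d) := by
    apply det_isHomogeneous
    intro i j
    exact pderiv_isHomogeneous (hahom i) j
  -- homogeneity of the product
  have hPhom : (∏ t : Fin N, (ℓ t) ^ (n - 1)).IsHomogeneous (N * (n - 1)) := by
    have := IsHomogeneous.prod Finset.univ (fun t => (ℓ t) ^ (n - 1)) (fun _ => n - 1)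
      (fun t _ => by simpa using (hℓhom t).pow (n - 1))
    simpa [Finset.sum_const, Finset.card_univ, mul_comm] using this
  have hP0 : (∏ t : Fin N, (ℓ t) ^ (n - 1)) ≠ 0 :=
    Finset.prod_ne_zero_iff.mpr (fun t _ => pow_ne_zero _ (hℓ0 t))
  obtain ⟨S, hS⟩ := hprod Finset.univ
  exact (homog_factor hPhom hDhom hP0 hD hS).1
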